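/- Let Q(x) := ∑_{n≥1} n·x_n² + 2·∑_{n≥1} n·x_n·(∑_{k>n} x_k) on sequences with ∑ √n·|x_n| < ∞, with norm ‖x‖ := ∑_{n≥1} √n·|x_n|. Then inf { Q(x) : ‖x‖ = 1 } = 0; in particular Q is not positive definite. Explicitly, for each N ≥ 2, the sequence x^{(N)} with x_n^{(N)} = (−1)^{n+1}/a_N for 1 ≤ n ≤ N and 0 otherwise, where a_N := ∑_{n=1}^N √n, has norm 1 and satisfies Q(x^{(N)}) ≤ 9/(4N²). -/

import Mathlib

/-- The quadratic form `Q(x) = ∑_{n≥1} n x_n² + 2 ∑_{n≥1} n x_n ∑_{k>n} x_k`. -/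
noncomputable def Qform (x : ℕ → ℝ) : ℝ :=
  (∑' n : ℕ, (n : ℝ) * (x n) ^ 2)
    + 2 * ∑' n : ℕ, (n : ℝ) * x n * (∑' k : ℕ, if n < k then x k else 0)

noncomputable def Aalt (m : ℕ) : ℝ := ∑ k ∈ Finset.Ioc 0 m, (-1:ℝ)^(k+1)

lemma Aalt_eval (m : ℕ) : Aalt m = if Even m then 0 else 1 := by
  induction m with
  | zero => simp [Aalt]
  | succ n ih =>
    rw [Aalt, Finset.sum_Ioc_succ_top (Nat.zero_le _), ← Aalt, ih]
    rcases Nat.even_or_odd n with h | h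
    · simp [h, Nat.even_add_one, pow_succ, Even.neg_one_pow (by simpa [Nat.even_add_one] using h : Even (n+1+1))]
    · simp [Nat.not_even_iff_odd.mpr h, Nat.even_add_one, Odd.neg_one_pow (by simp [Nat.odd_add_one, Nat.not_even_iff_odd.mpr h] : Odd (n+1+1))]

lemma L1 (N : ℕ) : ∑ n ∈ Finset.Ioc 0 N, (n:ℝ) = N*(N+1)/2 := by
  induction N with
  | zero => simp
  | succ n ih =>
    rw [Finset.sum_Ioc_succ_top (Nat.zero_le _), ih]
    push_cast; ring

lemma L2 (N : ℕ) : ∑ n ∈ Finset.Ioc 0 N, (n:ℝ) * (if Even n then (0:ℝ) else 1)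
    = if Even N then (N:ℝ)^2/4 else ((N:ℝ)+1)^2/4 := by
  induction N with
  | zero => simp
  | succ n ih =>
    rw [Finset.sum_Ioc_succ_top (Nat.zero_le _), ih]
    rcases Nat.even_or_odd n with h | h
    · have h1 : ¬ Even (n+1) := by simp [Nat.even_add_one, h]
      rw [if_pos h, if_neg h1, if_neg h1]
      push_cast; ring
    · have h' : ¬ Even n := Nat.not_even_iff_odd.mpr h
      have h2 : Even (n+1) := by simp [Nat.even_add_one, h']
      rw [if_neg h', if_pos h2, if_pos h2]
      push_cast; ring

lemma L3 (N : ℕ) : ∑ n ∈ Finset.Ioc 0 N, (n:ℝ) * (-1:ℝ)^(n+1)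
    = if Even N then -(N:ℝ)/2 else ((N:ℝ)+1)/2 := by
  induction N with
  | zero => simp
  | succ n ih =>
    rw [Finset.sum_Ioc_succ_top (Nat.zero_le _), ih]
    rcases Nat.even_or_odd n with h | h
    · have : (-1:ℝ)^(n+1+1) = 1 := Even.neg_one_pow (by simpa [Nat.even_add_one] using h)
      rw [this, if_pos h, if_neg (by simp [Nat.even_add_one, h])]
      push_cast; ring
    · have h' : ¬ Even n := Nat.not_even_iff_odd.mpr h
      have : (-1:ℝ)^(n+1+1) = -1 := Odd.neg_one_pow (by simp [Nat.odd_add_one, h'] )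
      rw [this, if_neg h', if_pos (by simp [Nat.even_add_one, h'])]
      push_cast; ring

lemma keysum (N : ℕ) :
    (∑ n ∈ Finset.Ioc 0 N, (n:ℝ))
      + 2 * (∑ n ∈ Finset.Ioc 0 N, (n:ℝ)*(-1:ℝ)^(n+1)*(Aalt N - Aalt n)) ≤ ((N:ℝ)+1)/2 := by
  have e1 : ∀ n : ℕ, (n:ℝ)*(-1:ℝ)^(n+1)*(Aalt N - Aalt n)
      = Aalt N * ((n:ℝ)*(-1:ℝ)^(n+1)) - (n:ℝ) * (if Even n then (0:ℝ) else 1) := by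
    intro n
    rw [Aalt_eval n]
    rcases Nat.even_or_odd n with h | h
    · simp [h]; ring
    · have h' : ¬ Even n := Nat.not_even_iff_odd.mpr h
      have : (-1:ℝ)^(n+1) = 1 := Even.neg_one_pow (by simpa [Nat.even_add_one] using h')
      simp [h', this]; ring
  rw [Finset.sum_congr rfl (fun n _ => e1 n), Finset.sum_sub_distrib, ← Finset.mul_sum,
    L1, L2, L3, Aalt_eval]
  split_ifs with h
  · nlinarith [(Nat.cast_nonneg N : (0:ℝ) ≤ N)]
  · nlinarith [(Nat.cast_nonneg N : (0:ℝ) ≤ N)]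


lemma sqrt_sum_lb (N : ℕ) : (2/3:ℝ) * N * Real.sqrt N ≤ ∑ m ∈ Finset.Icc 1 N, Real.sqrt m := by
  induction N with
  | zero => simp
  | succ n ih =>
    rw [show Finset.Icc 1 (n+1) = Finset.Ioc 0 (n+1) from (Finset.Icc_add_one_left_eq_Ioc 0 (n+1)),
      Finset.sum_Ioc_succ_top (Nat.zero_le _),
      ← (Finset.Icc_add_one_left_eq_Ioc 0 n : Finset.Icc 1 n = Finset.Ioc 0 n)]
    have hs : (0:ℝ) ≤ Real.sqrt n := Real.sqrt_nonneg _
    have hu : (0:ℝ) ≤ Real.sqrt (n+1) := Real.sqrt_nonneg _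
    have hs2 : Real.sqrt n ^ 2 = n := Real.sq_sqrt (by positivity)
    have hu2 : Real.sqrt ((n:ℝ)+1) ^ 2 = (n:ℝ)+1 := Real.sq_sqrt (by positivity)
    have hle : Real.sqrt n ≤ Real.sqrt (n+1) := Real.sqrt_le_sqrt (by push_cast; linarith)
    have key : (2/3:ℝ) * ((n:ℝ)+1) * Real.sqrt (n+1) ≤ (2/3:ℝ) * n * Real.sqrt n + Real.sqrt (n+1) := by
      nlinarith [sq_nonneg (Real.sqrt (n+1) - Real.sqrt n), mul_nonneg hs hu,
        mul_nonneg (mul_nonneg hs hs) hu, mul_nonneg (mul_nonneg hu hu) hs]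
    calc (2/3:ℝ) * ((n:ℕ)+1 : ℕ) * Real.sqrt ((n:ℕ)+1 : ℕ)
        = (2/3:ℝ) * ((n:ℝ)+1) * Real.sqrt (n+1) := by push_cast; ring_nf
      _ ≤ (2/3:ℝ) * n * Real.sqrt n + Real.sqrt (n+1) := key
      _ ≤ (∑ m ∈ Finset.Icc 1 n, Real.sqrt m) + Real.sqrt ((n:ℕ)+1 : ℕ) := by
          push_cast; linarith

lemma qform_nonneg (x : ℕ → ℝ) (hg : Summable (fun n : ℕ => Real.sqrt n * |x n|)) :
    0 ≤ Qform x := by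
  set g : ℕ → ℝ := fun n => Real.sqrt n * |x n| with hgdef
  have hgnn : ∀ n, 0 ≤ g n := fun n => mul_nonneg (Real.sqrt_nonneg _) (abs_nonneg _)
  set C : ℝ := ∑' n, g n with hC
  -- |x| is summable
  have hx1 : Summable (fun k : ℕ => |x k|) := by
    rw [← summable_nat_add_iff 1]
    refine Summable.of_nonneg_of_le (fun k => abs_nonneg _) (fun k => ?_)
      ((summable_nat_add_iff 1).2 hg)
    have h1 : (1:ℝ) ≤ Real.sqrt ((k+1 : ℕ) : ℝ) :=
      Real.one_le_sqrt.mpr (by push_cast; linarith [Nat.cast_nonneg (α := ℝ) k])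
    calc |x (k+1)| = 1 * |x (k+1)| := (one_mul _).symm
      _ ≤ Real.sqrt ((k+1 : ℕ) : ℝ) * |x (k+1)| :=
          mul_le_mul_of_nonneg_right h1 (abs_nonneg _)
  have hxs : Summable x := summable_abs_iff.mp hx1
  -- tail indicator functions
  set S : ℕ → ℝ := fun n => ∑' k, if n ≤ k then x k else 0 with hS
  set T : ℕ → ℝ := fun n => ∑' k, if n < k then x k else 0 with hT
  set t : ℕ → ℝ := fun n => ∑' k, if n ≤ k then g k else 0 with ht
  have hsumS : ∀ n : ℕ, Summable (fun k => if n ≤ k then x k else 0) := by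
    intro n
    refine Summable.of_norm_bounded hx1 (fun k => ?_)
    by_cases h : n ≤ k <;> simp [h, abs_nonneg]
  have hsumT : ∀ n : ℕ, Summable (fun k => if n < k then x k else 0) := by
    intro n
    refine Summable.of_norm_bounded hx1 (fun k => ?_)
    by_cases h : n < k <;> simp [h, abs_nonneg]
  have hsumtg : ∀ n : ℕ, Summable (fun k => if n ≤ k then g k else 0) := by
    intro n
    refine Summable.of_nonneg_of_le (fun k => ?_) (fun k => ?_) hg
    · by_cases h : n ≤ k <;> simp [h, hgnn]
    · by_cases h : n ≤ k <;> simp [h, hgnn]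
  have htle : ∀ n, t n ≤ C := by
    intro n
    refine Summable.tsum_le_tsum (fun k => ?_) (hsumtg n) hg
    by_cases h : n ≤ k <;> simp [h, hgnn]
  have htnn : ∀ n, 0 ≤ t n := by
    intro n
    refine tsum_nonneg (fun k => ?_)
    by_cases h : n ≤ k <;> simp [h, hgnn]
  -- T n = S (n+1)
  have hTS : ∀ n, T n = S (n+1) := by
    intro n
    exact tsum_congr fun k => if_congr (by omega) rfl rfl
  -- S n = x n + T n
  have hST : ∀ n, S n = x n + T n := by
    intro n
    have hsplit : ∀ k : ℕ, (if n ≤ k then x k else 0)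
        = (if k = n then x n else 0) + (if n < k then x k else 0) := by
      intro k
      rcases lt_trichotomy k n with h | h | h
      · simp [h.ne, Nat.not_le.mpr h, Nat.lt_asymm h]
      · subst h; simp
      · simp [h, Nat.le_of_lt h, (Nat.ne_of_gt h : k ≠ n)]
    have hs1 : Summable (fun k : ℕ => if k = n then x n else 0) :=
      summable_of_ne_finset_zero (s := {n}) (by intro k hk; simp at hk; simp [hk])
    calc S n = ∑' k, ((if k = n then x n else 0) + (if n < k then x k else 0)) :=
          tsum_congr hsplit
      _ = (∑' k, if k = n then x n else 0) + T n := Summable.tsum_add hs1 (hsumT n)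
      _ = x n + T n := by rw [tsum_ite_eq]
  -- the key bound √n |S n| ≤ t n
  have bnd : ∀ n : ℕ, Real.sqrt n * |S n| ≤ t n := by
    intro n
    have h1 : Real.sqrt n * S n = ∑' k, Real.sqrt n * (if n ≤ k then x k else 0) :=
      (tsum_mul_left).symm
    have habs : Summable (fun k => ‖Real.sqrt n * (if n ≤ k then x k else 0)‖) :=
      ((hsumS n).mul_left _).abs
    have h2 : |∑' k, Real.sqrt n * (if n ≤ k then x k else 0)|
        ≤ ∑' k, |Real.sqrt n * (if n ≤ k then x k else 0)| := by
      simpa [Real.norm_eq_abs] using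
        norm_tsum_le_tsum_norm (f := fun k => Real.sqrt n * (if n ≤ k then x k else 0)) habs
    have h3 : (∑' k, |Real.sqrt n * (if n ≤ k then x k else 0)|) ≤ t n := by
      refine Summable.tsum_le_tsum (fun k => ?_) (by simpa [Real.norm_eq_abs] using habs) (hsumtg n)
      by_cases h : n ≤ k
      · simp only [h, if_true]
        rw [abs_mul, abs_of_nonneg (Real.sqrt_nonneg _)]
        exact mul_le_mul_of_nonneg_right
          (Real.sqrt_le_sqrt (by exact_mod_cast h)) (abs_nonneg _)
      · simp [h]
    calc Real.sqrt n * |S n| = |Real.sqrt n * S n| := by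
          rw [abs_mul, abs_of_nonneg (Real.sqrt_nonneg _)]
      _ ≤ t n := by rw [h1]; exact le_trans h2 h3
  -- t tends to 0
  have htzero : Filter.Tendsto t Filter.atTop (nhds 0) := by
    have hrw : ∀ n : ℕ, t n = C - ∑ i ∈ Finset.range n, g i := by
      intro n
      have hinj : Function.Injective (fun i : ℕ => i + n) := add_left_injective n
      have h0 : Function.support (fun k => if n ≤ k then g k else 0)
          ⊆ Set.range (fun i : ℕ => i + n) := by
        intro k hk
        by_cases h : n ≤ k
        · exact ⟨k - n, by simp; omega⟩
        · exfalso
          apply hk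
          simp [h]
      have h1 : (∑' i, (if n ≤ i + n then g (i+n) else 0)) = t n :=
        hinj.tsum_eq h0
      have h2 : (∑' i : ℕ, g (i + n)) = t n := by
        rw [← h1]
        exact tsum_congr fun i => by simp [Nat.le_add_left]
      have h3 := Summable.sum_add_tsum_nat_add n hg
      rw [h2] at h3
      linarith
    have : Filter.Tendsto (fun n => C - ∑ i ∈ Finset.range n, g i) Filter.atTop (nhds (C - C)) :=
      Filter.Tendsto.sub tendsto_const_nhds hg.hasSum.tendsto_sum_nat
    rw [sub_self] at this
    exact (funext hrw : t = _) ▸ this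
  -- summability of the two series in Qform
  have hsum1 : Summable (fun n : ℕ => (n:ℝ) * x n ^ 2) := by
    have he : ∀ n : ℕ, (n:ℝ) * x n ^ 2 = (g n)^2 := by
      intro n
      rw [hgdef]
      rw [mul_pow, Real.sq_sqrt (Nat.cast_nonneg n), sq_abs]
    have : Summable (fun n => (g n)^2) := by
      refine Summable.of_norm_bounded_eventually hg ?_
      rw [Nat.cofinite_eq_atTop]
      have : Filter.Tendsto g Filter.atTop (nhds 0) := hg.tendsto_atTop_zero
      filter_upwards [this.eventually (ge_mem_nhds one_pos)] with n hn
      have := hgnn n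
      rw [Real.norm_eq_abs, abs_of_nonneg (sq_nonneg _)]
      nlinarith
    exact this.congr fun n => (he n).symm
  have hTbound : ∀ n : ℕ, Real.sqrt n * |T n| ≤ C := by
    intro n
    have h1 : Real.sqrt n * |T n| ≤ Real.sqrt (n+1:ℕ) * |S (n+1)| := by
      rw [hTS n]
      exact mul_le_mul_of_nonneg_right
        (Real.sqrt_le_sqrt (by exact_mod_cast Nat.le_succ n)) (abs_nonneg _)
    exact le_trans h1 (le_trans (bnd (n+1)) (htle (n+1)))
  have hsum2 : Summable (fun n : ℕ => (n:ℝ) * x n * T n) := by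
    refine Summable.of_norm_bounded (hg.mul_left C) (fun n => ?_)
    rw [Real.norm_eq_abs, abs_mul, abs_mul]
    have h1 : |(n:ℝ)| = Real.sqrt n * Real.sqrt n := by
      rw [abs_of_nonneg (Nat.cast_nonneg n)]
      exact (Real.mul_self_sqrt (Nat.cast_nonneg n)).symm
    rw [h1]
    calc Real.sqrt n * Real.sqrt n * |x n| * |T n|
        = (Real.sqrt n * |x n|) * (Real.sqrt n * |T n|) := by ring
      _ ≤ (Real.sqrt n * |x n|) * C := by
          exact mul_le_mul_of_nonneg_left (hTbound n) (hgnn n)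
      _ = C * g n := by rw [hgdef]; ring
  -- Qform as a single tsum
  have hQ : HasSum (fun n : ℕ => (n:ℝ) * x n ^ 2 + 2 * ((n:ℝ) * x n * T n)) (Qform x) :=
    hsum1.hasSum.add (hsum2.hasSum.mul_left 2)
  -- partial sums bounded below
  have hP := hQ.tendsto_sum_nat
  have hlow : ∀ M : ℕ, - (t M)^2
      ≤ ∑ n ∈ Finset.range M, ((n:ℝ) * x n ^ 2 + 2 * ((n:ℝ) * x n * T n)) := by
    intro M
    have hterm : ∀ n : ℕ, (n:ℝ) * x n ^ 2 + 2 * ((n:ℝ) * x n * T n)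
        = (((n:ℝ) * S n ^ 2) - (((n+1:ℕ):ℝ) * S (n+1) ^ 2)) + S (n+1)^2 := by
      intro n
      rw [hST n, hTS n]
      push_cast
      ring
    rw [Finset.sum_congr rfl (fun n _ => hterm n), Finset.sum_add_distrib,
      Finset.sum_range_sub' (f := fun i : ℕ => (i:ℝ) * S i ^ 2)]
    have key : (M:ℝ) * S M ^ 2 ≤ (t M)^2 := by
      have h2 : (Real.sqrt M * |S M|)^2 ≤ (t M)^2 :=
        pow_le_pow_left₀ (mul_nonneg (Real.sqrt_nonneg _) (abs_nonneg _)) (bnd M) 2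
      calc (M:ℝ) * S M ^ 2 = (Real.sqrt M * |S M|)^2 := by
            rw [mul_pow, Real.sq_sqrt (Nat.cast_nonneg M), sq_abs]
        _ ≤ (t M)^2 := h2
    have hpos : (0:ℝ) ≤ ∑ n ∈ Finset.range M, S (n+1)^2 :=
      Finset.sum_nonneg fun n _ => sq_nonneg _
    simp only [Nat.cast_zero, zero_mul]
    linarith
  have hneg : Filter.Tendsto (fun M => -(t M)^2) Filter.atTop (nhds 0) := by
    have := (htzero.pow 2).neg
    simpa using this
  exact le_of_tendsto_of_tendsto' hneg hP hlow

section explicit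
variable (N : ℕ)

lemma apos (hN : 1 ≤ N) : (0:ℝ) < ∑ m ∈ Finset.Icc 1 N, Real.sqrt m := by
  have h := sqrt_sum_lb N
  have h1 : (0:ℝ) < (2/3:ℝ) * N * Real.sqrt N := by
    have hN' : (0:ℝ) < N := by exact_mod_cast hN
    have : (0:ℝ) < Real.sqrt N := Real.sqrt_pos.mpr hN'
    positivity
  linarith

lemma explicit_norm (hN : 1 ≤ N) :
    (∑' n : ℕ, Real.sqrt n *
      |(if 1 ≤ n ∧ n ≤ N then (-1:ℝ)^(n+1) / (∑ m ∈ Finset.Icc 1 N, Real.sqrt m) else 0)|) = 1 := by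
  set a : ℝ := ∑ m ∈ Finset.Icc 1 N, Real.sqrt m with ha
  have hapos : 0 < a := apos N hN
  have hsupp : ∀ n ∉ Finset.Icc 1 N,
      Real.sqrt n * |(if 1 ≤ n ∧ n ≤ N then (-1:ℝ)^(n+1) / a else 0)| = 0 := by
    intro n hn
    rw [Finset.mem_Icc] at hn
    rw [if_neg hn]
    simp
  rw [tsum_eq_sum hsupp]
  have hterm : ∀ n ∈ Finset.Icc 1 N,
      Real.sqrt n * |(if 1 ≤ n ∧ n ≤ N then (-1:ℝ)^(n+1) / a else 0)|
        = Real.sqrt n * (1/a) := by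
    intro n hn
    rw [Finset.mem_Icc] at hn
    rw [if_pos hn, abs_div, abs_pow, abs_neg, abs_one, one_pow, abs_of_pos hapos]
  rw [Finset.sum_congr rfl hterm, ← Finset.sum_mul]
  field_simp
  exact ha.symm

lemma explicit_qbound (hN : 2 ≤ N) :
    Qform (fun n => if 1 ≤ n ∧ n ≤ N then
        (-1:ℝ)^(n+1) / (∑ m ∈ Finset.Icc 1 N, Real.sqrt m) else 0) ≤ 9 / (4*(N:ℝ)^2) := by
  set a : ℝ := ∑ m ∈ Finset.Icc 1 N, Real.sqrt m with ha
  have hapos : 0 < a := apos N (by omega)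
  set x : ℕ → ℝ := fun n => if 1 ≤ n ∧ n ≤ N then (-1:ℝ)^(n+1) / a else 0 with hx
  -- value of the inner tail sums
  have hTval : ∀ n, n ≤ N → (∑' k : ℕ, if n < k then x k else 0) = (Aalt N - Aalt n) / a := by
    intro n hn
    have hsupp : ∀ k ∉ Finset.Ioc n N, (if n < k then x k else 0) = 0 := by
      intro k hk
      rw [Finset.mem_Ioc] at hk
      by_cases h : n < k
      · have h2 : ¬ (1 ≤ k ∧ k ≤ N) := by omega
        rw [if_pos h, hx]
        simp only [if_neg h2]
      · rw [if_neg h]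
    rw [tsum_eq_sum hsupp]
    have hterm : ∀ k ∈ Finset.Ioc n N, (if n < k then x k else 0) = (-1:ℝ)^(k+1) / a := by
      intro k hk
      rw [Finset.mem_Ioc] at hk
      rw [if_pos hk.1, hx]
      simp only [if_pos (show 1 ≤ k ∧ k ≤ N by omega)]
    rw [Finset.sum_congr rfl hterm, ← Finset.sum_div]
    congr 1
    have := Finset.sum_Ioc_consecutive (fun k : ℕ => (-1:ℝ)^(k+1)) (Nat.zero_le n) hn
    rw [Aalt, Aalt]
    linarith
  -- first tsum
  have hq1 : (∑' n : ℕ, (n:ℝ) * x n ^ 2) = (∑ n ∈ Finset.Ioc 0 N, (n:ℝ)) / a^2 := by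
    have hsupp : ∀ n ∉ Finset.Ioc 0 N, (n:ℝ) * x n ^ 2 = 0 := by
      intro n hn
      rw [Finset.mem_Ioc] at hn
      by_cases h0 : n = 0
      · simp [h0]
      · have h2 : ¬ (1 ≤ n ∧ n ≤ N) := by omega
        rw [hx]; simp only [if_neg h2]; ring
    rw [tsum_eq_sum hsupp, Finset.sum_div]
    refine Finset.sum_congr rfl (fun n hn => ?_)
    rw [Finset.mem_Ioc] at hn
    rw [hx]
    simp only [if_pos (show 1 ≤ n ∧ n ≤ N by omega)]
    rw [div_pow]
    rw [show ((-1:ℝ)^(n+1))^2 = 1 by rw [← pow_mul, mul_comm, pow_mul]; norm_num]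
    ring
  -- second tsum
  have hq2 : (∑' n : ℕ, (n:ℝ) * x n * (∑' k : ℕ, if n < k then x k else 0))
      = (∑ n ∈ Finset.Ioc 0 N, (n:ℝ)*(-1:ℝ)^(n+1)*(Aalt N - Aalt n)) / a^2 := by
    have hsupp : ∀ n ∉ Finset.Ioc 0 N,
        (n:ℝ) * x n * (∑' k : ℕ, if n < k then x k else 0) = 0 := by
      intro n hn
      rw [Finset.mem_Ioc] at hn
      by_cases h0 : n = 0
      · simp [h0]
      · have h2 : ¬ (1 ≤ n ∧ n ≤ N) := by omega
        rw [hx]; simp only [if_neg h2]; ring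
    rw [tsum_eq_sum hsupp, Finset.sum_div]
    refine Finset.sum_congr rfl (fun n hn => ?_)
    rw [Finset.mem_Ioc] at hn
    rw [hTval n hn.2, hx]
    simp only [if_pos (show 1 ≤ n ∧ n ≤ N by omega)]
    ring
  have hEle := keysum N
  have hQval : Qform x = ((∑ n ∈ Finset.Ioc 0 N, (n:ℝ))
      + 2 * (∑ n ∈ Finset.Ioc 0 N, (n:ℝ)*(-1:ℝ)^(n+1)*(Aalt N - Aalt n))) / a^2 := by
    rw [Qform, hq1, hq2]
    ring
  rw [hQval]
  have hN2 : (2:ℝ) ≤ N := by exact_mod_cast hN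
  have ha2 : (4/9:ℝ)*(N:ℝ)^3 ≤ a^2 := by
    have h := sqrt_sum_lb N
    have hs : Real.sqrt N ^ 2 = (N:ℝ) := Real.sq_sqrt (by positivity)
    have hnn : (0:ℝ) ≤ (2/3:ℝ) * N * Real.sqrt N := by positivity
    have h2 : ((2/3:ℝ)*N*Real.sqrt N)^2 ≤ a^2 := by
      apply pow_le_pow_left₀ hnn h
    calc (4/9:ℝ)*(N:ℝ)^3 = ((2/3:ℝ)*N*Real.sqrt N)^2 := by
          rw [mul_pow, mul_pow, hs]; ring
      _ ≤ a^2 := h2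
  rw [div_le_div_iff₀ (by positivity) (by positivity)]
  nlinarith [mul_le_mul_of_nonneg_right hEle (show (0:ℝ) ≤ 4*(N:ℝ)^2 by positivity),
    mul_nonneg (sq_nonneg (N:ℝ)) (show (0:ℝ) ≤ (N:ℝ)-1 by linarith)]

end explicit


/-- `inf { Q(x) : ‖x‖_{ℓ^{1,1/2}} = 1 } = 0`, witnessed by the explicit alternating
sequences `x^{(N)}`; in particular `Q` is not positive definite. -/
theorem stmt_6 :
    sInf {q : ℝ | ∃ x : ℕ → ℝ, Summable (fun n : ℕ => Real.sqrt n * |x n|)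
        ∧ (∑' n : ℕ, Real.sqrt n * |x n|) = 1 ∧ q = Qform x} = 0
    ∧ ∀ N : ℕ, 2 ≤ N →
      (∑' n : ℕ, Real.sqrt n *
          |(if 1 ≤ n ∧ n ≤ N then (-1 : ℝ) ^ (n + 1) / (∑ m ∈ Finset.Icc 1 N, Real.sqrt m) else 0)|) = 1
      ∧ Qform (fun n => if 1 ≤ n ∧ n ≤ N then
            (-1 : ℝ) ^ (n + 1) / (∑ m ∈ Finset.Icc 1 N, Real.sqrt m) else 0)
          ≤ 9 / (4 * (N : ℝ) ^ 2) := by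
  set Sset : Set ℝ := {q : ℝ | ∃ x : ℕ → ℝ, Summable (fun n : ℕ => Real.sqrt n * |x n|)
        ∧ (∑' n : ℕ, Real.sqrt n * |x n|) = 1 ∧ q = Qform x} with hSset
  have hsummable : ∀ N : ℕ, Summable (fun n : ℕ => Real.sqrt n *
      |(if 1 ≤ n ∧ n ≤ N then (-1 : ℝ) ^ (n + 1) / (∑ m ∈ Finset.Icc 1 N, Real.sqrt m) else 0)|) := by
    intro N
    refine summable_of_ne_finset_zero (s := Finset.Icc 1 N) (fun n hn => ?_)
    rw [Finset.mem_Icc] at hn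
    rw [if_neg hn]
    simp
  have hmem : ∀ N : ℕ, 2 ≤ N → Qform (fun n => if 1 ≤ n ∧ n ≤ N then
      (-1 : ℝ) ^ (n + 1) / (∑ m ∈ Finset.Icc 1 N, Real.sqrt m) else 0) ∈ Sset := by
    intro N hN
    exact ⟨_, hsummable N, explicit_norm N (by omega), rfl⟩
  have hlb : ∀ q ∈ Sset, (0:ℝ) ≤ q := by
    rintro q ⟨x, hs, -, rfl⟩
    exact qform_nonneg x hs
  have hbdd : BddBelow Sset := ⟨0, hlb⟩
  have hne : Sset.Nonempty := ⟨_, hmem 2 le_rfl⟩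
  constructor
  · refine le_antisymm ?_ (le_csInf hne hlb)
    by_contra hpos
    push_neg at hpos
    set s := sInf Sset with hs
    obtain ⟨N, hNgt⟩ := exists_nat_gt (max 2 (9/(4*s)))
    have hN2 : 2 ≤ N := by
      have : (2:ℝ) < N := lt_of_le_of_lt (le_max_left _ _) hNgt
      exact_mod_cast this.le
    have hNr : (2:ℝ) ≤ N := by exact_mod_cast hN2
    have hN9 : 9/(4*s) < (N:ℝ) := lt_of_le_of_lt (le_max_right _ _) hNgt
    have hcle : s ≤ Qform (fun n => if 1 ≤ n ∧ n ≤ N then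
        (-1 : ℝ) ^ (n + 1) / (∑ m ∈ Finset.Icc 1 N, Real.sqrt m) else 0) :=
      csInf_le hbdd (hmem N hN2)
    have hqb := explicit_qbound N hN2
    have hfin : 9 / (4 * (N:ℝ)^2) < s := by
      rw [div_lt_iff₀ (by positivity)]
      have h1 : 9 < 4*s*(N:ℝ) := by
        rw [div_lt_iff₀ (by positivity)] at hN9
        linarith [mul_comm ((N:ℝ)) (4*s)]
      nlinarith
    linarith
  · intro N hN
    exact ⟨explicit_norm N (by omega), explicit_qbound N hN⟩
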